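/- arXiv:1409.7565 — 2 statements merged into one kernel-verified Lean document; each statement's English description precedes it below -/
import Mathlib

section
/- Let X, Y, X0, Y0 be quasi-Banach spaces, 0<θ<1, and suppose Y0∩Y1 ↪ Y with a constant C>0 such that ‖y‖_Y ≤ C·‖y‖_{Y0}^{1-θ}·‖y‖_{Y1}^{θ} for all y ∈ Y0∩Y1. If T is a bounded linear operator from X into Y0, into Y1, and into Y, then the Gelfand numbers satisfy c_{n+m-1}(T : X→Y) ≤ C · c_n(T : X→Y0)^{1-θ} · c_m(T : X→Y1)^{θ} for all n,m ∈ ℕ. -/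
/-- The `n`-th Gelfand number of a continuous linear operator `T : X → Y`:
`c_n(T) = inf` over subspaces `M ⊆ X` with `codim M < n` of
`sup {‖T x‖ : x ∈ M, ‖x‖ ≤ 1}`. -/
noncomputable def gelfandNum {X Y : Type*} [NormedAddCommGroup X] [NormedSpace ℂ X]
    [NormedAddCommGroup Y] [NormedSpace ℂ Y] (T : X →L[ℂ] Y) (n : ℕ) : ℝ :=
  sInf {r : ℝ | ∃ M : Submodule ℂ X, Module.rank ℂ (X ⧸ M) < (n : Cardinal) ∧
    r = sSup {s : ℝ | ∃ x ∈ M, ‖x‖ ≤ 1 ∧ s = ‖T x‖}}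

section aux

variable {X Y : Type*} [NormedAddCommGroup X] [NormedSpace ℂ X]
  [NormedAddCommGroup Y] [NormedSpace ℂ Y]

private lemma gelfand_bddAbove (T : X →L[ℂ] Y) (M : Submodule ℂ X) :
    BddAbove {s : ℝ | ∃ x ∈ M, ‖x‖ ≤ 1 ∧ s = ‖T x‖} :=
  ⟨‖T‖, by rintro s ⟨x, hxM, hx1, rfl⟩; exact T.unit_le_opNorm x hx1⟩

private lemma gelfand_zero_mem (T : X →L[ℂ] Y) (M : Submodule ℂ X) :
    (0 : ℝ) ∈ {s : ℝ | ∃ x ∈ M, ‖x‖ ≤ 1 ∧ s = ‖T x‖} :=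
  ⟨0, M.zero_mem, by simp⟩

private lemma gelfand_sSup_nonneg (T : X →L[ℂ] Y) (M : Submodule ℂ X) :
    (0 : ℝ) ≤ sSup {s : ℝ | ∃ x ∈ M, ‖x‖ ≤ 1 ∧ s = ‖T x‖} :=
  le_csSup (gelfand_bddAbove T M) (gelfand_zero_mem T M)

private lemma gelfand_le_sSup (T : X →L[ℂ] Y) (M : Submodule ℂ X) {x : X}
    (hx : x ∈ M) (hx1 : ‖x‖ ≤ 1) :
    ‖T x‖ ≤ sSup {s : ℝ | ∃ x ∈ M, ‖x‖ ≤ 1 ∧ s = ‖T x‖} :=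
  le_csSup (gelfand_bddAbove T M) ⟨x, hx, hx1, rfl⟩

private lemma gelfand_bddBelow (T : X →L[ℂ] Y) (n : ℕ) :
    BddBelow {r : ℝ | ∃ M : Submodule ℂ X, Module.rank ℂ (X ⧸ M) < (n : Cardinal) ∧
      r = sSup {s : ℝ | ∃ x ∈ M, ‖x‖ ≤ 1 ∧ s = ‖T x‖}} :=
  ⟨0, by rintro r ⟨M, _, rfl⟩; exact gelfand_sSup_nonneg T M⟩

private lemma gelfand_set_nonempty (T : X →L[ℂ] Y) {n : ℕ} (hn : 1 ≤ n) :
    {r : ℝ | ∃ M : Submodule ℂ X, Module.rank ℂ (X ⧸ M) < (n : Cardinal) ∧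
      r = sSup {s : ℝ | ∃ x ∈ M, ‖x‖ ≤ 1 ∧ s = ‖T x‖}}.Nonempty := by
  refine ⟨_, ⊤, ?_, rfl⟩
  have : Subsingleton (X ⧸ (⊤ : Submodule ℂ X)) := (Submodule.Quotient.subsingleton_iff).2 rfl
  rw [rank_subsingleton']
  exact_mod_cast Nat.pos_of_ne_zero (by omega)

private lemma gelfandNum_nonneg (T : X →L[ℂ] Y) (n : ℕ) : 0 ≤ gelfandNum T n :=
  Real.sInf_nonneg (by rintro r ⟨M, _, rfl⟩; exact gelfand_sSup_nonneg T M)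

private lemma rank_quotient_inf_le' {X : Type*} [AddCommGroup X] [Module ℂ X]
    (M₀ M₁ : Submodule ℂ X) :
    Module.rank ℂ (X ⧸ (M₀ ⊓ M₁)) ≤ Module.rank ℂ (X ⧸ M₀) + Module.rank ℂ (X ⧸ M₁) := by
  have hker : M₀ ⊓ M₁ ≤ LinearMap.ker ((M₀.mkQ).prod (M₁.mkQ)) := by
    intro x hx
    rw [Submodule.mem_inf] at hx
    simp [LinearMap.mem_ker, Prod.ext_iff, Submodule.Quotient.mk_eq_zero, hx.1, hx.2]
  have hinj : Function.Injective (Submodule.liftQ (M₀ ⊓ M₁) _ hker) := by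
    rw [← LinearMap.ker_eq_bot, Submodule.ker_liftQ_eq_bot]
    intro x hx
    simp only [LinearMap.mem_ker, LinearMap.prod_apply, Function.prod, Prod.mk_eq_zero,
      Submodule.mkQ_apply, Submodule.Quotient.mk_eq_zero] at hx
    exact Submodule.mem_inf.2 hx
  calc Module.rank ℂ (X ⧸ (M₀ ⊓ M₁)) ≤ Module.rank ℂ ((X ⧸ M₀) × (X ⧸ M₁)) :=
        LinearMap.rank_le_of_injective _ hinj
    _ = _ := rank_prod'

end aux

/-- Interpolation property of Gelfand numbers: if `T` maps `X` into `Y₀`, `Y₁` and `Y`,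
where `Y₀ ∩ Y₁ ↪ Y` (realized via injections `j₀ : Y₀ → Y`, `j₁ : Y₁ → Y`) with
`‖y‖_Y ≤ C ‖y‖_{Y₀}^{1-θ} ‖y‖_{Y₁}^{θ}` for all `y ∈ Y₀ ∩ Y₁`, then
`c_{n+m-1}(T : X → Y) ≤ C · c_n(T : X → Y₀)^{1-θ} · c_m(T : X → Y₁)^{θ}`. -/
theorem gelfand_interpolation
    {X Y Y₀ Y₁ : Type*}
    [NormedAddCommGroup X] [NormedSpace ℂ X]
    [NormedAddCommGroup Y] [NormedSpace ℂ Y]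
    [NormedAddCommGroup Y₀] [NormedSpace ℂ Y₀]
    [NormedAddCommGroup Y₁] [NormedSpace ℂ Y₁]
    (θ C : ℝ) (hθ0 : 0 < θ) (hθ1 : θ < 1) (hC : 0 < C)
    (j₀ : Y₀ →ₗ[ℂ] Y) (j₁ : Y₁ →ₗ[ℂ] Y)
    (hj₀ : Function.Injective j₀) (hj₁ : Function.Injective j₁)
    (hint : ∀ (y₀ : Y₀) (y₁ : Y₁), j₀ y₀ = j₁ y₁ →
      ‖j₀ y₀‖ ≤ C * ‖y₀‖ ^ (1 - θ) * ‖y₁‖ ^ θ)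
    (T : X →L[ℂ] Y) (T₀ : X →L[ℂ] Y₀) (T₁ : X →L[ℂ] Y₁)
    (hT₀ : ∀ x, j₀ (T₀ x) = T x) (hT₁ : ∀ x, j₁ (T₁ x) = T x)
    (n m : ℕ) (hn : 1 ≤ n) (hm : 1 ≤ m) :
    gelfandNum T (n + m - 1) ≤
      C * gelfandNum T₀ n ^ (1 - θ) * gelfandNum T₁ m ^ θ := by
  set a := gelfandNum T₀ n with ha
  set b := gelfandNum T₁ m with hb
  have ha0 : 0 ≤ a := gelfandNum_nonneg T₀ n
  have hb0 : 0 ≤ b := gelfandNum_nonneg T₁ m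
  have hθ1' : (0:ℝ) < 1 - θ := by linarith
  have key : ∀ ε : ℝ, 0 < ε →
      gelfandNum T (n + m - 1) ≤ C * (a + ε) ^ (1 - θ) * (b + ε) ^ θ := by
    intro ε hε
    obtain ⟨r₀, hr₀mem, hr₀lt⟩ :=
      Real.lt_sInf_add_pos (gelfand_set_nonempty T₀ hn) hε
    obtain ⟨r₁, hr₁mem, hr₁lt⟩ :=
      Real.lt_sInf_add_pos (gelfand_set_nonempty T₁ hm) hε
    obtain ⟨M₀, hM₀, rfl⟩ := hr₀mem
    obtain ⟨M₁, hM₁, rfl⟩ := hr₁mem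
    -- rank of the intersection quotient
    obtain ⟨k₀, hk₀⟩ := Cardinal.lt_aleph0.1 (hM₀.trans (Cardinal.nat_lt_aleph0 n))
    obtain ⟨k₁, hk₁⟩ := Cardinal.lt_aleph0.1 (hM₁.trans (Cardinal.nat_lt_aleph0 m))
    rw [hk₀, Nat.cast_lt] at hM₀
    rw [hk₁, Nat.cast_lt] at hM₁
    have hrank : Module.rank ℂ (X ⧸ (M₀ ⊓ M₁)) < ((n + m - 1 : ℕ) : Cardinal) := by
      calc Module.rank ℂ (X ⧸ (M₀ ⊓ M₁))
          ≤ Module.rank ℂ (X ⧸ M₀) + Module.rank ℂ (X ⧸ M₁) :=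
            rank_quotient_inf_le' M₀ M₁
        _ = ((k₀ + k₁ : ℕ) : Cardinal) := by rw [hk₀, hk₁]; push_cast; ring
        _ < ((n + m - 1 : ℕ) : Cardinal) := by exact_mod_cast (by omega : k₀ + k₁ < n + m - 1)
    have hmem : sSup {s : ℝ | ∃ x ∈ M₀ ⊓ M₁, ‖x‖ ≤ 1 ∧ s = ‖T x‖} ∈
        {r : ℝ | ∃ M : Submodule ℂ X, Module.rank ℂ (X ⧸ M) < ((n + m - 1 : ℕ) : Cardinal) ∧
          r = sSup {s : ℝ | ∃ x ∈ M, ‖x‖ ≤ 1 ∧ s = ‖T x‖}} :=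
      ⟨M₀ ⊓ M₁, hrank, rfl⟩
    refine (csInf_le (gelfand_bddBelow T _) hmem).trans ?_
    refine csSup_le ⟨0, gelfand_zero_mem T _⟩ ?_
    rintro s ⟨x, hx, hx1, rfl⟩
    have hxy : j₀ (T₀ x) = j₁ (T₁ x) := (hT₀ x).trans (hT₁ x).symm
    have h1 : ‖T x‖ ≤ C * ‖T₀ x‖ ^ (1 - θ) * ‖T₁ x‖ ^ θ := by
      rw [← hT₀ x]; exact hint _ _ hxy
    refine h1.trans ?_
    have h₀ : ‖T₀ x‖ ≤ a + ε :=
      (gelfand_le_sSup T₀ M₀ (Submodule.mem_inf.1 hx).1 hx1).trans hr₀lt.le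
    have h₁ : ‖T₁ x‖ ≤ b + ε :=
      (gelfand_le_sSup T₁ M₁ (Submodule.mem_inf.1 hx).2 hx1).trans hr₁lt.le
    gcongr <;> first | exact norm_nonneg _ | linarith
  -- pass to the limit ε → 0⁺
  have htend : Filter.Tendsto (fun ε : ℝ => C * (a + ε) ^ (1 - θ) * (b + ε) ^ θ)
      (nhdsWithin 0 (Set.Ioi 0)) (nhds (C * a ^ (1 - θ) * b ^ θ)) := by
    have hc : ContinuousAt (fun ε : ℝ => C * (a + ε) ^ (1 - θ) * (b + ε) ^ θ) 0 := by
      have h0 : ContinuousAt (fun ε : ℝ => (a + ε) ^ (1 - θ)) 0 :=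
        (continuousAt_const.add continuousAt_id).rpow_const (Or.inr hθ1'.le)
      have h2 : ContinuousAt (fun ε : ℝ => (b + ε) ^ θ) 0 :=
        (continuousAt_const.add continuousAt_id).rpow_const (Or.inr hθ0.le)
      exact (continuousAt_const.mul h0).mul h2
    have := hc.continuousWithinAt (s := Set.Ioi (0:ℝ))
    simpa using this.tendsto
  exact ge_of_tendsto htend
    (Filter.eventually_of_mem self_mem_nhdsWithin fun ε hε => key ε hε)
end

section
/- Let X, Y, Y0, Y1 be quasi-Banach spaces, 0<θ<1, and suppose Y0∩Y1 ↪ Y with a constant C>0 such that ‖y‖_Y ≤ C·‖y‖_{Y0}^{1-θ}·‖y‖_{Y1}^{θ} for all y ∈ Y0∩Y1. If T is bounded from X into Y0, into Y1 and into Y, then the Weyl numbers satisfy x_{n+m-1}(T : X→Y) ≤ C · x_n(T : X→Y0)^{1-θ} · x_m(T : X→Y1)^{θ} for all n,m ∈ ℕ. -/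
open scoped ENNReal

instance : Fact ((1 : ℝ≥0∞) ≤ 2) := ⟨one_le_two⟩

/-- The sequence space `ℓ₂` of square-summable complex sequences. -/
noncomputable abbrev ellTwo : Type := lp (fun _ : ℕ => ℂ) 2

/-- The `n`-th approximation number:
`a_n(T) = inf {‖T - F‖ : rank F < n}`. -/
noncomputable def approxNum {E F : Type*} [NormedAddCommGroup E] [NormedSpace ℂ E]
    [NormedAddCommGroup F] [NormedSpace ℂ F] (T : E →L[ℂ] F) (n : ℕ) : ℝ :=
  sInf {r : ℝ | ∃ G : E →L[ℂ] F,
    Module.rank ℂ (LinearMap.range (G : E →ₗ[ℂ] F)) < (n : Cardinal) ∧ r = ‖T - G‖}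

/-- The `n`-th Weyl number: `x_n(T) = sup {a_n(T ∘ A) : A : ℓ₂ → E, ‖A‖ ≤ 1}`. -/
noncomputable def weylNum {E F : Type*} [NormedAddCommGroup E] [NormedSpace ℂ E]
    [NormedAddCommGroup F] [NormedSpace ℂ F] (T : E →L[ℂ] F) (n : ℕ) : ℝ :=
  sSup {r : ℝ | ∃ A : ellTwo →L[ℂ] E, ‖A‖ ≤ 1 ∧ r = approxNum (T.comp A) n}

section Aux

variable {E F : Type*} [NormedAddCommGroup E] [NormedSpace ℂ E]
    [NormedAddCommGroup F] [NormedSpace ℂ F]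

/-- The defining set of `approxNum`. -/
def approxSet (T : E →L[ℂ] F) (n : ℕ) : Set ℝ :=
  {r : ℝ | ∃ G : E →L[ℂ] F,
    Module.rank ℂ (LinearMap.range (G : E →ₗ[ℂ] F)) < (n : Cardinal) ∧ r = ‖T - G‖}

lemma approxNum_eq (T : E →L[ℂ] F) (n : ℕ) : approxNum T n = sInf (approxSet T n) := rfl

lemma approxSet_nonempty (T : E →L[ℂ] F) {n : ℕ} (hn : 1 ≤ n) :
    (approxSet T n).Nonempty := by
  refine ⟨‖T - 0‖, 0, ?_, rfl⟩
  have : LinearMap.range ((0 : E →L[ℂ] F) : E →ₗ[ℂ] F) = ⊥ := by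
    simp
  rw [this, rank_bot]
  exact_mod_cast Nat.pos_of_ne_zero (by omega)

lemma approxSet_bddBelow (T : E →L[ℂ] F) (n : ℕ) : BddBelow (approxSet T n) := by
  refine ⟨0, fun r hr => ?_⟩
  obtain ⟨G, -, rfl⟩ := hr
  exact norm_nonneg _

lemma approxNum_nonneg (T : E →L[ℂ] F) (n : ℕ) : 0 ≤ approxNum T n :=
  Real.sInf_nonneg (fun r hr => by obtain ⟨G, -, rfl⟩ := hr; exact norm_nonneg _)

lemma approxNum_le (T : E →L[ℂ] F) {n : ℕ} {G : E →L[ℂ] F}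
    (hG : Module.rank ℂ (LinearMap.range (G : E →ₗ[ℂ] F)) < (n : Cardinal)) :
    approxNum T n ≤ ‖T - G‖ :=
  csInf_le (approxSet_bddBelow T n) ⟨G, hG, rfl⟩

lemma approxNum_le_opNorm (T : E →L[ℂ] F) {n : ℕ} (hn : 1 ≤ n) :
    approxNum T n ≤ ‖T‖ := by
  have h : Module.rank ℂ (LinearMap.range ((0 : E →L[ℂ] F) : E →ₗ[ℂ] F)) < (n : Cardinal) := by
    have : LinearMap.range ((0 : E →L[ℂ] F) : E →ₗ[ℂ] F) = ⊥ := by simp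
    rw [this, rank_bot]
    exact_mod_cast Nat.pos_of_ne_zero (by omega)
  simpa using approxNum_le T h

/-- The defining set of `weylNum`. -/
def weylSet (T : E →L[ℂ] F) (n : ℕ) : Set ℝ :=
  {r : ℝ | ∃ A : ellTwo →L[ℂ] E, ‖A‖ ≤ 1 ∧ r = approxNum (T.comp A) n}

lemma weylNum_eq (T : E →L[ℂ] F) (n : ℕ) : weylNum T n = sSup (weylSet T n) := rfl

lemma weylSet_nonempty (T : E →L[ℂ] F) (n : ℕ) : (weylSet T n).Nonempty :=
  ⟨approxNum (T.comp 0) n, 0, by simp, rfl⟩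

lemma weylSet_bddAbove (T : E →L[ℂ] F) {n : ℕ} (hn : 1 ≤ n) :
    BddAbove (weylSet T n) := by
  refine ⟨‖T‖, fun r hr => ?_⟩
  obtain ⟨A, hA, rfl⟩ := hr
  refine (approxNum_le_opNorm _ hn).trans ?_
  calc ‖T.comp A‖ ≤ ‖T‖ * ‖A‖ := T.opNorm_comp_le A
    _ ≤ ‖T‖ * 1 := mul_le_mul_of_nonneg_left hA (norm_nonneg T)
    _ = ‖T‖ := mul_one _

lemma approxNum_comp_le_weylNum (T : E →L[ℂ] F) {n : ℕ} (hn : 1 ≤ n)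
    {A : ellTwo →L[ℂ] E} (hA : ‖A‖ ≤ 1) :
    approxNum (T.comp A) n ≤ weylNum T n :=
  le_csSup (weylSet_bddAbove T hn) ⟨A, hA, rfl⟩

lemma weylNum_nonneg (T : E →L[ℂ] F) {n : ℕ} (hn : 1 ≤ n) : 0 ≤ weylNum T n :=
  (approxNum_nonneg (T.comp 0) n).trans
    (approxNum_comp_le_weylNum T hn (by simp))

lemma weylNum_le (T : E →L[ℂ] F) (n : ℕ) {b : ℝ}
    (hb : ∀ A : ellTwo →L[ℂ] E, ‖A‖ ≤ 1 → approxNum (T.comp A) n ≤ b) :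
    weylNum T n ≤ b := by
  refine csSup_le (weylSet_nonempty T n) ?_
  rintro r ⟨A, hA, rfl⟩
  exact hb A hA

end Aux

section Key

variable {X Y Y₀ Y₁ : Type*}
    [NormedAddCommGroup X] [NormedSpace ℂ X]
    [NormedAddCommGroup Y] [NormedSpace ℂ Y]
    [NormedAddCommGroup Y₀] [NormedSpace ℂ Y₀]
    [NormedAddCommGroup Y₁] [NormedSpace ℂ Y₁]

set_option maxHeartbeats 1600000 in
/-- Key per-operator estimate: given finite-rank approximants `G₀` of `T₀∘A` and `G₁` of
`T₁∘A`, the `(n+m-1)`-th approximation number of `T∘A` is controlled by the interpolated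
product of the approximation errors. -/
lemma key_estimate
    (θ C : ℝ) (hθ0 : 0 < θ) (hθ1 : θ < 1) (hC : 0 < C)
    (j₀ : Y₀ →ₗ[ℂ] Y) (j₁ : Y₁ →ₗ[ℂ] Y)
    (hint : ∀ (y₀ : Y₀) (y₁ : Y₁), j₀ y₀ = j₁ y₁ →
      ‖j₀ y₀‖ ≤ C * ‖y₀‖ ^ (1 - θ) * ‖y₁‖ ^ θ)
    (T : X →L[ℂ] Y) (T₀ : X →L[ℂ] Y₀) (T₁ : X →L[ℂ] Y₁)
    (hT₀ : ∀ x, j₀ (T₀ x) = T x) (hT₁ : ∀ x, j₁ (T₁ x) = T x)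
    (n m : ℕ) (hn : 1 ≤ n) (hm : 1 ≤ m)
    (A : ellTwo →L[ℂ] X)
    (G₀ : ellTwo →L[ℂ] Y₀) (G₁ : ellTwo →L[ℂ] Y₁)
    (hG₀ : Module.rank ℂ (LinearMap.range (G₀ : ellTwo →ₗ[ℂ] Y₀)) < (n : Cardinal))
    (hG₁ : Module.rank ℂ (LinearMap.range (G₁ : ellTwo →ₗ[ℂ] Y₁)) < (m : Cardinal)) :
    approxNum (T.comp A) (n + m - 1) ≤
      C * ‖T₀.comp A - G₀‖ ^ (1 - θ) * ‖T₁.comp A - G₁‖ ^ θ := by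
  classical
  set V : Submodule ℂ ellTwo := LinearMap.ker (G₀ : ellTwo →ₗ[ℂ] Y₀) ⊓
    LinearMap.ker (G₁ : ellTwo →ₗ[ℂ] Y₁) with hV
  have hVclosed : IsClosed (V : Set ellTwo) := by
    have h0 : IsClosed (LinearMap.ker (G₀ : ellTwo →ₗ[ℂ] Y₀) : Set ellTwo) :=
      ContinuousLinearMap.isClosed_ker G₀
    have h1 : IsClosed (LinearMap.ker (G₁ : ellTwo →ₗ[ℂ] Y₁) : Set ellTwo) :=
      ContinuousLinearMap.isClosed_ker G₁
    have : (V : Set ellTwo) =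
        (LinearMap.ker (G₀ : ellTwo →ₗ[ℂ] Y₀) : Set ellTwo) ∩
          (LinearMap.ker (G₁ : ellTwo →ₗ[ℂ] Y₁) : Set ellTwo) := rfl
    rw [this]
    exact h0.inter h1
  haveI : CompleteSpace V := hVclosed.completeSpace_coe
  -- finite dimensionality of ranges
  haveI hfin₀ : Module.Finite ℂ (LinearMap.range (G₀ : ellTwo →ₗ[ℂ] Y₀)) :=
    Module.rank_lt_aleph0_iff.mp (hG₀.trans (Cardinal.nat_lt_aleph0 n))
  haveI hfin₁ : Module.Finite ℂ (LinearMap.range (G₁ : ellTwo →ₗ[ℂ] Y₁)) :=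
    Module.rank_lt_aleph0_iff.mp (hG₁.trans (Cardinal.nat_lt_aleph0 m))
  have hfr₀ : Module.finrank ℂ (LinearMap.range (G₀ : ellTwo →ₗ[ℂ] Y₀)) < n := by
    have := Module.finrank_eq_rank ℂ (LinearMap.range (G₀ : ellTwo →ₗ[ℂ] Y₀))
    rw [← this] at hG₀
    exact_mod_cast hG₀
  have hfr₁ : Module.finrank ℂ (LinearMap.range (G₁ : ellTwo →ₗ[ℂ] Y₁)) < m := by
    have := Module.finrank_eq_rank ℂ (LinearMap.range (G₁ : ellTwo →ₗ[ℂ] Y₁))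
    rw [← this] at hG₁
    exact_mod_cast hG₁
  -- `Vᗮ` is finite dimensional of dimension `≤ (n-1) + (m-1)`
  set φ : (Vᗮ : Submodule ℂ ellTwo) →ₗ[ℂ]
      (LinearMap.range (G₀ : ellTwo →ₗ[ℂ] Y₀) × LinearMap.range (G₁ : ellTwo →ₗ[ℂ] Y₁)) :=
    LinearMap.prod
      (((G₀ : ellTwo →ₗ[ℂ] Y₀).rangeRestrict).comp (Vᗮ.subtype))
      (((G₁ : ellTwo →ₗ[ℂ] Y₁).rangeRestrict).comp (Vᗮ.subtype)) with hφdef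
  have hφ : Function.Injective φ := by
    rw [← LinearMap.ker_eq_bot, LinearMap.ker_eq_bot']
    rintro ⟨x, hx⟩ hzero
    rw [hφdef] at hzero
    simp only [LinearMap.prod_apply, Pi.prod, Function.prod_apply, Prod.mk_eq_zero, LinearMap.comp_apply,
      Submodule.subtype_apply, Subtype.ext_iff, LinearMap.codRestrict_apply,
      LinearMap.rangeRestrict, Submodule.coe_zero, ZeroMemClass.coe_zero] at hzero
    have hxV : x ∈ V := ⟨hzero.1, hzero.2⟩
    have : x = 0 := (Submodule.orthogonal_disjoint V).le_bot ⟨hxV, hx⟩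
    exact Subtype.ext this
  haveI : FiniteDimensional ℂ (Vᗮ : Submodule ℂ ellTwo) :=
    Module.Finite.of_injective φ hφ
  have hfrV : Module.finrank ℂ (Vᗮ : Submodule ℂ ellTwo) ≤ (n - 1) + (m - 1) := by
    have h1 : Module.finrank ℂ (Vᗮ : Submodule ℂ ellTwo) ≤
        Module.finrank ℂ
          (LinearMap.range (G₀ : ellTwo →ₗ[ℂ] Y₀) ×
            LinearMap.range (G₁ : ellTwo →ₗ[ℂ] Y₁)) :=
      LinearMap.finrank_le_finrank_of_injective hφ
    rw [Module.finrank_prod] at h1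
    omega
  -- the projection
  set P : ellTwo →L[ℂ] ellTwo := V.subtypeL.comp V.orthogonalProjection with hP
  have hPmem : ∀ x : ellTwo, P x ∈ V := fun x => (V.orthogonalProjection x).2
  have hPnorm : ∀ x : ellTwo, ‖P x‖ ≤ ‖x‖ := by
    intro x
    have h1 : ‖P x‖ = ‖V.orthogonalProjection x‖ := rfl
    rw [h1]
    calc ‖V.orthogonalProjection x‖ ≤ ‖V.orthogonalProjection‖ * ‖x‖ :=
          V.orthogonalProjection.le_opNorm x
      _ ≤ 1 * ‖x‖ := by gcongr; exact Submodule.orthogonalProjection_norm_le V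
      _ = ‖x‖ := one_mul _
  -- the finite rank approximant of `T ∘ A`
  set Q : ellTwo →L[ℂ] ellTwo := ContinuousLinearMap.id ℂ ellTwo - P with hQ
  set FF : ellTwo →L[ℂ] Y := (T.comp A).comp Q with hFF
  have hrangeQ : LinearMap.range (Q : ellTwo →ₗ[ℂ] ellTwo) ≤ Vᗮ := by
    rintro y ⟨x, rfl⟩
    have : (Q : ellTwo →ₗ[ℂ] ellTwo) x = x - ↑(V.orthogonalProjection x) := by
      simp [hQ, hP, ContinuousLinearMap.coe_sub', ContinuousLinearMap.sub_apply]
    rw [this]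
    exact Submodule.sub_starProjection_mem_orthogonal (K := V) x
  have hrankFF : Module.rank ℂ (LinearMap.range (FF : ellTwo →ₗ[ℂ] Y)) <
      ((n + m - 1 : ℕ) : Cardinal) := by
    have hco : (FF : ellTwo →ₗ[ℂ] Y) =
        ((T.comp A : ellTwo →ₗ[ℂ] Y)).comp (Q : ellTwo →ₗ[ℂ] ellTwo) := rfl
    have hrange : LinearMap.range (FF : ellTwo →ₗ[ℂ] Y) ≤
        Submodule.map (T.comp A : ellTwo →ₗ[ℂ] Y) Vᗮ := by
      rw [hco, LinearMap.range_comp]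
      exact Submodule.map_mono hrangeQ
    haveI : Module.Finite ℂ (Submodule.map (T.comp A : ellTwo →ₗ[ℂ] Y) Vᗮ) :=
      Module.Finite.map Vᗮ _
    have h1 : Module.rank ℂ (LinearMap.range (FF : ellTwo →ₗ[ℂ] Y)) ≤
        Module.rank ℂ (Submodule.map (T.comp A : ellTwo →ₗ[ℂ] Y) Vᗮ) :=
      Submodule.rank_mono hrange
    have h2 : Module.rank ℂ (Submodule.map (T.comp A : ellTwo →ₗ[ℂ] Y) Vᗮ) =
        (Module.finrank ℂ (Submodule.map (T.comp A : ellTwo →ₗ[ℂ] Y) Vᗮ) : Cardinal) :=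
      (Module.finrank_eq_rank ℂ _).symm
    have h3 : Module.finrank ℂ (Submodule.map (T.comp A : ellTwo →ₗ[ℂ] Y) Vᗮ) ≤
        (n - 1) + (m - 1) :=
      (Submodule.finrank_map_le _ _).trans hfrV
    have h4 : ((n - 1) + (m - 1) : ℕ) < (n + m - 1 : ℕ) := by omega
    calc Module.rank ℂ (LinearMap.range (FF : ellTwo →ₗ[ℂ] Y)) ≤
          (Module.finrank ℂ (Submodule.map (T.comp A : ellTwo →ₗ[ℂ] Y) Vᗮ) : Cardinal) :=
          h1.trans_eq h2
      _ ≤ (((n - 1) + (m - 1) : ℕ) : Cardinal) := by exact_mod_cast h3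
      _ < ((n + m - 1 : ℕ) : Cardinal) := by exact_mod_cast h4
  -- norm estimate of `T∘A - FF = (T∘A) ∘ P`
  set D₀ : ℝ := ‖T₀.comp A - G₀‖ with hD₀
  set D₁ : ℝ := ‖T₁.comp A - G₁‖ with hD₁
  have hD₀0 : 0 ≤ D₀ := norm_nonneg _
  have hD₁0 : 0 ≤ D₁ := norm_nonneg _
  have hθ0' : 0 ≤ θ := hθ0.le
  have hθ1' : 0 ≤ 1 - θ := by linarith
  have hsub : T.comp A - FF = (T.comp A).comp P := by
    rw [hFF, hQ, ContinuousLinearMap.comp_sub, ContinuousLinearMap.comp_id]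
    abel
  have hM0 : 0 ≤ C * D₀ ^ (1 - θ) * D₁ ^ θ := by
    have := Real.rpow_nonneg hD₀0 (1 - θ)
    have := Real.rpow_nonneg hD₁0 θ
    positivity
  have hbound : ‖T.comp A - FF‖ ≤ C * D₀ ^ (1 - θ) * D₁ ^ θ := by
    rw [hsub]
    refine ContinuousLinearMap.opNorm_le_bound _ hM0 (fun x => ?_)
    set z : ellTwo := P x with hz
    have hzV : z ∈ V := hPmem x
    have hz₀ : G₀ z = 0 := hzV.1
    have hz₁ : G₁ z = 0 := hzV.2
    have hzn : ‖z‖ ≤ ‖x‖ := hPnorm x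
    have happ : ((T.comp A).comp P) x = T (A z) := rfl
    have h0 : ‖T (A z)‖ ≤ C * ‖T₀ (A z)‖ ^ (1 - θ) * ‖T₁ (A z)‖ ^ θ := by
      have h := hint (T₀ (A z)) (T₁ (A z)) (by rw [hT₀, hT₁])
      rwa [hT₀] at h
    have h2 : ‖T₀ (A z)‖ ≤ D₀ * ‖x‖ := by
      have he : T₀ (A z) = (T₀.comp A - G₀) z := by
        rw [ContinuousLinearMap.sub_apply, ContinuousLinearMap.comp_apply, hz₀, sub_zero]
      rw [he]
      calc ‖(T₀.comp A - G₀) z‖ ≤ D₀ * ‖z‖ := (T₀.comp A - G₀).le_opNorm z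
        _ ≤ D₀ * ‖x‖ := by gcongr
    have h3 : ‖T₁ (A z)‖ ≤ D₁ * ‖x‖ := by
      have he : T₁ (A z) = (T₁.comp A - G₁) z := by
        rw [ContinuousLinearMap.sub_apply, ContinuousLinearMap.comp_apply, hz₁, sub_zero]
      rw [he]
      calc ‖(T₁.comp A - G₁) z‖ ≤ D₁ * ‖z‖ := (T₁.comp A - G₁).le_opNorm z
        _ ≤ D₁ * ‖x‖ := by gcongr
    have hx0 : (0 : ℝ) ≤ ‖x‖ := norm_nonneg x
    have hxpow : ‖x‖ ^ (1 - θ) * ‖x‖ ^ θ = ‖x‖ := by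
      rw [← Real.rpow_add' hx0 (by intro h; linarith)]
      have h1 : 1 - θ + θ = 1 := by ring
      rw [h1, Real.rpow_one]
    calc ‖((T.comp A).comp P) x‖ = ‖T (A z)‖ := by rw [happ]
      _ ≤ C * ‖T₀ (A z)‖ ^ (1 - θ) * ‖T₁ (A z)‖ ^ θ := h0
      _ ≤ C * (D₀ * ‖x‖) ^ (1 - θ) * (D₁ * ‖x‖) ^ θ := by
          have p0 : ‖T₀ (A z)‖ ^ (1 - θ) ≤ (D₀ * ‖x‖) ^ (1 - θ) :=
            Real.rpow_le_rpow (norm_nonneg _) h2 hθ1'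
          have p1 : ‖T₁ (A z)‖ ^ θ ≤ (D₁ * ‖x‖) ^ θ :=
            Real.rpow_le_rpow (norm_nonneg _) h3 hθ0'
          have q0 : (0:ℝ) ≤ ‖T₁ (A z)‖ ^ θ := Real.rpow_nonneg (norm_nonneg _) θ
          have q1 : (0:ℝ) ≤ C * (D₀ * ‖x‖) ^ (1 - θ) := by positivity
          exact mul_le_mul (mul_le_mul le_rfl p0
            (Real.rpow_nonneg (norm_nonneg _) _) hC.le) p1 q0 q1
      _ = C * D₀ ^ (1 - θ) * D₁ ^ θ * (‖x‖ ^ (1 - θ) * ‖x‖ ^ θ) := by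
          rw [Real.mul_rpow hD₀0 hx0, Real.mul_rpow hD₁0 hx0]
          ring
      _ = C * D₀ ^ (1 - θ) * D₁ ^ θ * ‖x‖ := by rw [hxpow]
  exact (approxNum_le (T.comp A) hrankFF).trans hbound

end Key

set_option maxHeartbeats 1600000 in
/-- Interpolation property of Weyl numbers: if `T` maps `X` into `Y₀`, `Y₁` and `Y`,
where `Y₀ ∩ Y₁ ↪ Y` (realized via injections `j₀ : Y₀ → Y`, `j₁ : Y₁ → Y`) with
`‖y‖_Y ≤ C ‖y‖_{Y₀}^{1-θ} ‖y‖_{Y₁}^{θ}` for all `y ∈ Y₀ ∩ Y₁`, then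
`x_{n+m-1}(T : X → Y) ≤ C · x_n(T : X → Y₀)^{1-θ} · x_m(T : X → Y₁)^{θ}`. -/
theorem weyl_interpolation
    {X Y Y₀ Y₁ : Type*}
    [NormedAddCommGroup X] [NormedSpace ℂ X]
    [NormedAddCommGroup Y] [NormedSpace ℂ Y]
    [NormedAddCommGroup Y₀] [NormedSpace ℂ Y₀]
    [NormedAddCommGroup Y₁] [NormedSpace ℂ Y₁]
    (θ C : ℝ) (hθ0 : 0 < θ) (hθ1 : θ < 1) (hC : 0 < C)
    (j₀ : Y₀ →ₗ[ℂ] Y) (j₁ : Y₁ →ₗ[ℂ] Y)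
    (hj₀ : Function.Injective j₀) (hj₁ : Function.Injective j₁)
    (hint : ∀ (y₀ : Y₀) (y₁ : Y₁), j₀ y₀ = j₁ y₁ →
      ‖j₀ y₀‖ ≤ C * ‖y₀‖ ^ (1 - θ) * ‖y₁‖ ^ θ)
    (T : X →L[ℂ] Y) (T₀ : X →L[ℂ] Y₀) (T₁ : X →L[ℂ] Y₁)
    (hT₀ : ∀ x, j₀ (T₀ x) = T x) (hT₁ : ∀ x, j₁ (T₁ x) = T x)
    (n m : ℕ) (hn : 1 ≤ n) (hm : 1 ≤ m) :
    weylNum T (n + m - 1) ≤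
      C * weylNum T₀ n ^ (1 - θ) * weylNum T₁ m ^ θ := by
  set x₀ : ℝ := weylNum T₀ n with hx₀
  set x₁ : ℝ := weylNum T₁ m with hx₁
  have hx₀0 : 0 ≤ x₀ := weylNum_nonneg T₀ hn
  have hx₁0 : 0 ≤ x₁ := weylNum_nonneg T₁ hm
  have hθ0' : 0 ≤ θ := hθ0.le
  have hθ1' : 0 ≤ 1 - θ := by linarith
  -- it suffices to prove the bound with ε-slack
  have key : ∀ ε : ℝ, 0 < ε →
      weylNum T (n + m - 1) ≤ C * (x₀ + ε) ^ (1 - θ) * (x₁ + ε) ^ θ := by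
    intro ε hε
    refine weylNum_le T (n + m - 1) (fun A hA => ?_)
    obtain ⟨r₀, hr₀mem, hr₀⟩ :=
      Real.lt_sInf_add_pos (approxSet_nonempty (T₀.comp A) hn) hε
    obtain ⟨G₀, hG₀rank, rfl⟩ := hr₀mem
    obtain ⟨r₁, hr₁mem, hr₁⟩ :=
      Real.lt_sInf_add_pos (approxSet_nonempty (T₁.comp A) hm) hε
    obtain ⟨G₁, hG₁rank, rfl⟩ := hr₁mem
    have hD₀ : ‖T₀.comp A - G₀‖ ≤ x₀ + ε := by
      have h1 : sInf (approxSet (T₀.comp A) n) = approxNum (T₀.comp A) n := rfl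
      rw [h1] at hr₀
      have h2 : approxNum (T₀.comp A) n ≤ x₀ := approxNum_comp_le_weylNum T₀ hn hA
      linarith
    have hD₁ : ‖T₁.comp A - G₁‖ ≤ x₁ + ε := by
      have h1 : sInf (approxSet (T₁.comp A) m) = approxNum (T₁.comp A) m := rfl
      rw [h1] at hr₁
      have h2 : approxNum (T₁.comp A) m ≤ x₁ := approxNum_comp_le_weylNum T₁ hm hA
      linarith
    have hkey := key_estimate θ C hθ0 hθ1 hC j₀ j₁ hint T T₀ T₁ hT₀ hT₁
      n m hn hm A G₀ G₁ hG₀rank hG₁rank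
    refine hkey.trans ?_
    have p0 : ‖T₀.comp A - G₀‖ ^ (1 - θ) ≤ (x₀ + ε) ^ (1 - θ) :=
      Real.rpow_le_rpow (norm_nonneg _) hD₀ hθ1'
    have p1 : ‖T₁.comp A - G₁‖ ^ θ ≤ (x₁ + ε) ^ θ :=
      Real.rpow_le_rpow (norm_nonneg _) hD₁ hθ0'
    have q0 : (0:ℝ) ≤ ‖T₁.comp A - G₁‖ ^ θ := Real.rpow_nonneg (norm_nonneg _) θ
    have q1 : (0:ℝ) ≤ C * (x₀ + ε) ^ (1 - θ) := by positivity
    exact mul_le_mul (mul_le_mul le_rfl p0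
      (Real.rpow_nonneg (norm_nonneg _) _) hC.le) p1 q0 q1
  -- pass to the limit `ε → 0⁺`
  have htend : Filter.Tendsto (fun ε : ℝ => C * (x₀ + ε) ^ (1 - θ) * (x₁ + ε) ^ θ)
      (nhdsWithin 0 (Set.Ioi 0)) (nhds (C * x₀ ^ (1 - θ) * x₁ ^ θ)) := by
    have h0 : Filter.Tendsto (fun ε : ℝ => x₀ + ε) (nhds 0) (nhds x₀) := by
      simpa using (tendsto_const_nhds.add Filter.tendsto_id :
        Filter.Tendsto (fun ε : ℝ => x₀ + ε) (nhds 0) (nhds (x₀ + 0)))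
    have h1 : Filter.Tendsto (fun ε : ℝ => x₁ + ε) (nhds 0) (nhds x₁) := by
      simpa using (tendsto_const_nhds.add Filter.tendsto_id :
        Filter.Tendsto (fun ε : ℝ => x₁ + ε) (nhds 0) (nhds (x₁ + 0)))
    have hc0 : ContinuousAt (fun t : ℝ => t ^ (1 - θ)) x₀ :=
      Real.continuousAt_rpow_const x₀ (1 - θ) (Or.inr (by linarith))
    have hc1 : ContinuousAt (fun t : ℝ => t ^ θ) x₁ :=
      Real.continuousAt_rpow_const x₁ θ (Or.inr hθ0.le)
    have := ((tendsto_const_nhds.mul (hc0.tendsto.comp h0)).mul (hc1.tendsto.comp h1) :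
      Filter.Tendsto (fun ε : ℝ => C * (x₀ + ε) ^ (1 - θ) * (x₁ + ε) ^ θ)
        (nhds 0) (nhds (C * x₀ ^ (1 - θ) * x₁ ^ θ)))
    exact this.mono_left nhdsWithin_le_nhds
  refine ge_of_tendsto htend ?_
  filter_upwards [self_mem_nhdsWithin] with ε hε
  exact key ε hε
end
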